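/- (α-robust positivity) For every δ ∈ (0, π) there exists a constant C_δ > 0 such that for all α ∈ (0,1) and all y ∈ [δ, π]: (sin(π(1-α))/π) ∫₀^∞ s^(α-2)(1-e^(-2s))(1-cos y)/(1 - 2e^(-s) cos y + e^(-2s)) ds ≥ C_δ. -/

import Mathlib

open MeasureTheory Real

private lemma denom_pos {t c : ℝ} (ht0 : 0 < t) (ht1 : t < 1) (hc1 : c ≤ 1) :
    0 < 1 - 2 * t * c + t ^ 2 := by
  have h : (0:ℝ) < (1 - t)^2 := pow_pos (by linarith) 2
  nlinarith [mul_nonneg ht0.le (sub_nonneg.2 hc1)]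

private lemma denom_le_four {t c : ℝ} (ht0 : 0 < t) (ht1 : t < 1) (hc : -1 ≤ c) :
    1 - 2 * t * c + t ^ 2 ≤ 4 := by
  nlinarith [mul_nonneg ht0.le (by linarith : (0:ℝ) ≤ 1 + c)]

private lemma denom_key {t c : ℝ} (ht0 : 0 < t) (ht1 : t < 1) (hc : -1 ≤ c) (hc1 : c ≤ 1) :
    1 - c ≤ 2 * (1 - 2 * t * c + t ^ 2) := by
  rcases le_or_gt c 0 with h | h
  · nlinarith [mul_nonneg ht0.le (neg_nonneg.2 h), sq_nonneg t]
  · nlinarith [sq_nonneg (t - c), mul_nonneg h.le (sub_nonneg.2 hc1),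
      mul_nonneg (sub_nonneg.2 hc1) (by linarith : (0:ℝ) ≤ 1 + c)]

private lemma g_meas {α : ℝ} :
    Measurable (fun s : ℝ => s ^ (α - 2) * (1 - Real.exp (-2 * s))) := by
  fun_prop

private lemma g_integrable {α : ℝ} (h0 : 0 < α) (h1 : α < 1) :
    IntegrableOn (fun s : ℝ => s ^ (α - 2) * (1 - Real.exp (-2 * s))) (Set.Ioi (0:ℝ)) := by
  rw [← Set.Ioc_union_Ioi_eq_Ioi (zero_le_one (α := ℝ))]
  apply IntegrableOn.union
  · have hbase : IntegrableOn (fun s : ℝ => 2 * s ^ (α - 1)) (Set.Ioc (0:ℝ) 1) :=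
      ((intervalIntegral.intervalIntegrable_rpow' (by linarith) (a := 0) (b := 1)).1).const_mul 2
    refine hbase.mono' (g_meas.aestronglyMeasurable.restrict) ?_
    refine (ae_restrict_iff' measurableSet_Ioc).2 (ae_of_all _ fun s hs => ?_)
    have hs0 : (0:ℝ) < s := hs.1
    have hE1 : Real.exp (-2 * s) ≤ 1 := by
      rw [← Real.exp_zero]; exact Real.exp_le_exp.2 (by linarith)
    have hE2 : 1 - Real.exp (-2 * s) ≤ 2 * s := by
      have := Real.add_one_le_exp (-2 * s); linarith
    rw [Real.norm_of_nonneg (mul_nonneg (Real.rpow_nonneg hs0.le _) (by linarith))]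
    calc s ^ (α - 2) * (1 - Real.exp (-2 * s)) ≤ s ^ (α - 2) * (2 * s) :=
          mul_le_mul_of_nonneg_left hE2 (Real.rpow_nonneg hs0.le _)
      _ = 2 * s ^ (α - 1) := by
          rw [show α - 1 = (α - 2) + 1 by ring, Real.rpow_add_one hs0.ne']; ring
  · have hbase : IntegrableOn (fun s : ℝ => s ^ (α - 2)) (Set.Ioi (1:ℝ)) :=
      integrableOn_Ioi_rpow_of_lt (by linarith) one_pos
    refine hbase.mono' (g_meas.aestronglyMeasurable.restrict) ?_
    refine (ae_restrict_iff' measurableSet_Ioi).2 (ae_of_all _ fun s hs => ?_)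
    have hs0 : (0:ℝ) < s := lt_trans one_pos hs
    have hE1 : Real.exp (-2 * s) ≤ 1 := by
      rw [← Real.exp_zero]; exact Real.exp_le_exp.2 (by linarith)
    rw [Real.norm_of_nonneg (mul_nonneg (Real.rpow_nonneg hs0.le _) (by linarith))]
    calc s ^ (α - 2) * (1 - Real.exp (-2 * s)) ≤ s ^ (α - 2) * 1 :=
          mul_le_mul_of_nonneg_left (by linarith [Real.exp_pos (-2 * s)])
            (Real.rpow_nonneg hs0.le _)
      _ = s ^ (α - 2) := mul_one _

theorem stmt_14 (δ : ℝ) (hδ : δ ∈ Set.Ioo (0:ℝ) π) :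
    ∃ C > 0, ∀ α ∈ Set.Ioo (0:ℝ) 1, ∀ y ∈ Set.Icc δ π,
      C ≤ (sin (π * (1 - α)) / π) *
        ∫ s in Set.Ioi (0:ℝ),
          s ^ (α - 2) * (1 - exp (-2 * s)) * (1 - Real.cos y) /
            (1 - 2 * exp (-s) * Real.cos y + exp (-2 * s)) := by
  obtain ⟨hδ0, hδπ⟩ := hδ
  have hcδ : Real.cos δ < 1 := by
    have h := Real.cos_lt_cos_of_nonneg_of_le_pi (le_refl (0:ℝ)) hδπ.le hδ0
    simpa using h
  refine ⟨(1 - Real.cos δ) / (3 * π), div_pos (by linarith) (by positivity), ?_⟩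
  intro α hα y hy
  obtain ⟨hα0, hα1⟩ := hα
  obtain ⟨hyδ, hyπ⟩ := hy
  have hcy : Real.cos y ≤ Real.cos δ := Real.cos_le_cos_of_nonneg_of_le_pi hδ0.le hyπ hyδ
  have hcy1 : -1 ≤ Real.cos y := Real.neg_one_le_cos y
  set c : ℝ := Real.cos y with hcdef
  set g : ℝ → ℝ := fun s => s ^ (α - 2) * (1 - Real.exp (-2 * s)) with hgdef
  set f : ℝ → ℝ := fun s =>
    s ^ (α - 2) * (1 - Real.exp (-2 * s)) * (1 - c) /
      (1 - 2 * Real.exp (-s) * c + Real.exp (-2 * s)) with hfdef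
  -- pointwise facts
  have key : ∀ s ∈ Set.Ioi (0:ℝ),
      (1 - Real.cos δ) / 4 * g s ≤ f s ∧ 0 ≤ f s ∧ f s ≤ 2 * g s := by
    intro s hs
    have hs0 : (0:ℝ) < s := hs
    have ht0 : 0 < Real.exp (-s) := Real.exp_pos _
    have ht1 : Real.exp (-s) < 1 := by
      rw [← Real.exp_zero]; exact Real.exp_lt_exp.2 (by linarith)
    have he2 : Real.exp (-2 * s) = Real.exp (-s) ^ 2 := by
      rw [sq, ← Real.exp_add]; ring_nf
    have hD0 : 0 < 1 - 2 * Real.exp (-s) * c + Real.exp (-s) ^ 2 :=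
      denom_pos ht0 ht1 (by linarith)
    have hD4 : 1 - 2 * Real.exp (-s) * c + Real.exp (-s) ^ 2 ≤ 4 :=
      denom_le_four ht0 ht1 hcy1
    have hDk : 1 - c ≤ 2 * (1 - 2 * Real.exp (-s) * c + Real.exp (-s) ^ 2) :=
      denom_key ht0 ht1 hcy1 (by linarith)
    have hg0 : 0 ≤ g s := by
      have hE1 : Real.exp (-2 * s) ≤ 1 := by
        rw [← Real.exp_zero]; exact Real.exp_le_exp.2 (by linarith)
      exact mul_nonneg (Real.rpow_nonneg hs0.le _) (by linarith)
    have hfval : f s = g s * ((1 - c) / (1 - 2 * Real.exp (-s) * c + Real.exp (-s) ^ 2)) := by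
      rw [hfdef, hgdef]
      simp only [he2]
      rw [mul_div_assoc]
    have hr1 : (1 - Real.cos δ) / 4 ≤
        (1 - c) / (1 - 2 * Real.exp (-s) * c + Real.exp (-s) ^ 2) :=
      div_le_div₀ (by linarith) (by linarith) hD0 hD4
    have hr2 : (1 - c) / (1 - 2 * Real.exp (-s) * c + Real.exp (-s) ^ 2) ≤ 2 :=
      (div_le_iff₀ hD0).2 (by linarith)
    refine ⟨?_, ?_, ?_⟩
    · rw [hfval, mul_comm ((1 - Real.cos δ) / 4) (g s)]
      exact mul_le_mul_of_nonneg_left hr1 hg0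
    · rw [hfval]; exact mul_nonneg hg0 (div_nonneg (by linarith) hD0.le)
    · rw [hfval, mul_comm (2:ℝ) (g s)]
      exact mul_le_mul_of_nonneg_left hr2 hg0
  have hgInt : IntegrableOn g (Set.Ioi (0:ℝ)) := g_integrable hα0 hα1
  have hfMeas : AEStronglyMeasurable f (volume.restrict (Set.Ioi (0:ℝ))) := by
    apply Measurable.aestronglyMeasurable
    apply Measurable.div
    · fun_prop
    · fun_prop
  have hfInt : IntegrableOn f (Set.Ioi (0:ℝ)) := by
    refine (hgInt.const_mul 2).mono' hfMeas ?_
    refine (ae_restrict_iff' measurableSet_Ioi).2 (ae_of_all _ fun s hs => ?_)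
    rw [Real.norm_of_nonneg (key s hs).2.1]
    exact (key s hs).2.2
  have hf_nonneg : 0 ≤ᵐ[volume.restrict (Set.Ioi (0:ℝ))] f :=
    (ae_restrict_iff' measurableSet_Ioi).2 (ae_of_all _ fun s hs => (key s hs).2.1)
  have hKnn : (0:ℝ) ≤ (1 - Real.cos δ) / 4 := by
    apply div_nonneg (by linarith); norm_num
  rcases le_or_gt α (1/2) with hhalf | hhalf
  · -- case α ≤ 1/2 : use Ioc 0 1
    have hsub : Set.Ioc (0:ℝ) 1 ⊆ Set.Ioi 0 := fun x hx => hx.1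
    have hlow : ∀ s ∈ Set.Ioc (0:ℝ) 1,
        (1 - Real.cos δ) / 6 * s ^ (α - 1) ≤ f s := by
      intro s hs
      have hs0 : (0:ℝ) < s := hs.1
      have hexp : 2 / 3 * s ≤ 1 - Real.exp (-2 * s) := by
        have hE : 1 + 2 * s ≤ Real.exp (2 * s) := by
          linarith [Real.add_one_le_exp (2 * s)]
        have h1 : Real.exp (-2 * s) * (1 + 2 * s) ≤ 1 := by
          rw [show (-2 * s : ℝ) = -(2 * s) by ring, Real.exp_neg]
          rw [inv_mul_le_iff₀ (Real.exp_pos _)]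
          linarith
        nlinarith [Real.exp_pos (-2 * s), mul_nonneg hs0.le (sub_nonneg.2 hs.2)]
      have heq : (1 - Real.cos δ) / 6 * s ^ (α - 1) =
          (1 - Real.cos δ) / 4 * (s ^ (α - 2) * (2 / 3 * s)) := by
        rw [show α - 1 = (α - 2) + 1 by ring, Real.rpow_add_one hs0.ne']; ring
      calc (1 - Real.cos δ) / 6 * s ^ (α - 1)
          = (1 - Real.cos δ) / 4 * (s ^ (α - 2) * (2 / 3 * s)) := heq
        _ ≤ (1 - Real.cos δ) / 4 * g s := by
            apply mul_le_mul_of_nonneg_left _ hKnn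
            exact mul_le_mul_of_nonneg_left hexp (Real.rpow_nonneg hs0.le _)
        _ ≤ f s := (key s (hsub hs)).1
    have hlowInt : IntegrableOn (fun s : ℝ => (1 - Real.cos δ) / 6 * s ^ (α - 1))
        (Set.Ioc (0:ℝ) 1) :=
      ((intervalIntegral.intervalIntegrable_rpow' (by linarith) (a := 0) (b := 1)).1).const_mul _
    have hval : ∫ s in Set.Ioc (0:ℝ) 1, s ^ (α - 1) = 1 / α := by
      rw [← intervalIntegral.integral_of_le zero_le_one,
        integral_rpow (Or.inl (by linarith)), show α - 1 + 1 = α by ring,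
        Real.zero_rpow hα0.ne', Real.one_rpow]
      ring
    have hI1 : (1 - Real.cos δ) / 6 * (1 / α) ≤ ∫ s in Set.Ioi (0:ℝ), f s := by
      calc (1 - Real.cos δ) / 6 * (1 / α)
          = ∫ s in Set.Ioc (0:ℝ) 1, (1 - Real.cos δ) / 6 * s ^ (α - 1) := by
            rw [integral_const_mul, hval]
        _ ≤ ∫ s in Set.Ioc (0:ℝ) 1, f s :=
            setIntegral_mono_on hlowInt (hfInt.mono_set hsub) measurableSet_Ioc hlow
        _ ≤ ∫ s in Set.Ioi (0:ℝ), f s :=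
            setIntegral_mono_set hfInt hf_nonneg (HasSubset.Subset.eventuallyLE hsub)
    have hsin : 2 * α ≤ Real.sin (π * (1 - α)) := by
      rw [show π * (1 - α) = π - π * α by ring, Real.sin_pi_sub]
      have h := Real.mul_le_sin (x := π * α) (by positivity)
        (by nlinarith [Real.pi_pos])
      calc 2 * α = 2 / π * (π * α) := by field_simp
        _ ≤ Real.sin (π * α) := h
    have hsinnn : 0 ≤ Real.sin (π * (1 - α)) / π :=
      div_nonneg (by linarith) Real.pi_pos.le
    calc (1 - Real.cos δ) / (3 * π)
        = (2 * α / π) * ((1 - Real.cos δ) / 6 * (1 / α)) := by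
          field_simp; ring
      _ ≤ (Real.sin (π * (1 - α)) / π) * ((1 - Real.cos δ) / 6 * (1 / α)) := by
          refine mul_le_mul_of_nonneg_right ((div_le_div_iff_of_pos_right Real.pi_pos).2 hsin)
            (mul_nonneg (div_nonneg (by linarith) (by norm_num)) (by positivity))
      _ ≤ (Real.sin (π * (1 - α)) / π) * ∫ s in Set.Ioi (0:ℝ), f s :=
          mul_le_mul_of_nonneg_left hI1 hsinnn
  · -- case 1/2 < α : use Ioi 1
    have hsub : Set.Ioi (1:ℝ) ⊆ Set.Ioi 0 := fun x hx => show (0:ℝ) < x from lt_trans one_pos hx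
    have hlow : ∀ s ∈ Set.Ioi (1:ℝ),
        (1 - Real.cos δ) / 6 * s ^ (α - 2) ≤ f s := by
      intro s hs
      have hs1 : (1:ℝ) < s := hs
      have hs0 : (0:ℝ) < s := lt_trans one_pos hs1
      have hexp : (2:ℝ) / 3 ≤ 1 - Real.exp (-2 * s) := by
        have hE : (3:ℝ) ≤ Real.exp 2 := by linarith [Real.add_one_le_exp (2:ℝ)]
        have h1 : Real.exp (-2 * s) ≤ Real.exp (-2) := Real.exp_le_exp.2 (by linarith)
        have h2 : Real.exp (-2) * Real.exp 2 = 1 := by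
          rw [← Real.exp_add]; norm_num
        nlinarith [Real.exp_pos (-2 : ℝ)]
      have heq : (1 - Real.cos δ) / 6 * s ^ (α - 2) =
          (1 - Real.cos δ) / 4 * (s ^ (α - 2) * (2 / 3)) := by ring
      calc (1 - Real.cos δ) / 6 * s ^ (α - 2)
          = (1 - Real.cos δ) / 4 * (s ^ (α - 2) * (2 / 3)) := heq
        _ ≤ (1 - Real.cos δ) / 4 * g s := by
            apply mul_le_mul_of_nonneg_left _ hKnn
            exact mul_le_mul_of_nonneg_left hexp (Real.rpow_nonneg hs0.le _)
        _ ≤ f s := (key s (hsub hs)).1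
    have hlowInt : IntegrableOn (fun s : ℝ => (1 - Real.cos δ) / 6 * s ^ (α - 2))
        (Set.Ioi (1:ℝ)) :=
      (integrableOn_Ioi_rpow_of_lt (by linarith) one_pos).const_mul _
    have hval : ∫ s in Set.Ioi (1:ℝ), s ^ (α - 2) = 1 / (1 - α) := by
      rw [integral_Ioi_rpow_of_lt (by linarith) one_pos, Real.one_rpow]
      have h : α - 2 + 1 ≠ 0 := by intro h; apply hα1.ne; linarith
      have h2 : (1:ℝ) - α ≠ 0 := by intro h2; apply hα1.ne; linarith
      field_simp
      ring
    have hI1 : (1 - Real.cos δ) / 6 * (1 / (1 - α)) ≤ ∫ s in Set.Ioi (0:ℝ), f s := by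
      calc (1 - Real.cos δ) / 6 * (1 / (1 - α))
          = ∫ s in Set.Ioi (1:ℝ), (1 - Real.cos δ) / 6 * s ^ (α - 2) := by
            rw [integral_const_mul, hval]
        _ ≤ ∫ s in Set.Ioi (1:ℝ), f s :=
            setIntegral_mono_on hlowInt (hfInt.mono_set hsub) measurableSet_Ioi hlow
        _ ≤ ∫ s in Set.Ioi (0:ℝ), f s :=
            setIntegral_mono_set hfInt hf_nonneg (HasSubset.Subset.eventuallyLE hsub)
    have hsin : 2 * (1 - α) ≤ Real.sin (π * (1 - α)) := by
      have h := Real.mul_le_sin (x := π * (1 - α))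
        (by nlinarith [Real.pi_pos]) (by nlinarith [Real.pi_pos])
      calc 2 * (1 - α) = 2 / π * (π * (1 - α)) := by field_simp
        _ ≤ Real.sin (π * (1 - α)) := h
    have hsinnn : 0 ≤ Real.sin (π * (1 - α)) / π :=
      div_nonneg (by linarith) Real.pi_pos.le
    have h1α : (0:ℝ) < 1 - α := by linarith
    calc (1 - Real.cos δ) / (3 * π)
        = (2 * (1 - α) / π) * ((1 - Real.cos δ) / 6 * (1 / (1 - α))) := by
          field_simp; ring
      _ ≤ (Real.sin (π * (1 - α)) / π) * ((1 - Real.cos δ) / 6 * (1 / (1 - α))) := by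
          refine mul_le_mul_of_nonneg_right ((div_le_div_iff_of_pos_right Real.pi_pos).2 hsin)
            (mul_nonneg (div_nonneg (by linarith) (by norm_num)) (by positivity))
      _ ≤ (Real.sin (π * (1 - α)) / π) * ∫ s in Set.Ioi (0:ℝ), f s :=
          mul_le_mul_of_nonneg_left hI1 hsinnn
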